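/- arXiv:1310.5240 — 2 statements merged into one kernel-verified Lean document; each statement's English description precedes it below -/
import Mathlib

section
/- For each k ∈ {0, 2, 4, 6} there exists a CMDRR(8,k). -/
open scoped Classical

/-- A mixed doubles game: an unordered pair of teams, each team being a
(man, woman) pair, for `n` men and `n` women indexed by `Fin n`. -/
abbrev Game (n : ℕ) := Sym2 (Fin n × Fin n)

/-- A game is valid if its two teams have distinct men and distinct women. -/
def Game.valid {n : ℕ} (g : Game n) : Prop :=
  ∃ a b : Fin n × Fin n, g = s(a, b) ∧ a.1 ≠ b.1 ∧ a.2 ≠ b.2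

/-- Man `m` plays in game `g`. -/
def Game.manIn {n : ℕ} (m : Fin n) (g : Game n) : Prop :=
  ∃ a b : Fin n × Fin n, g = s(a, b) ∧ a.1 = m

/-- Woman `w` plays in game `g`. -/
def Game.womanIn {n : ℕ} (w : Fin n) (g : Game n) : Prop :=
  ∃ a b : Fin n × Fin n, g = s(a, b) ∧ a.2 = w

/-- Man `m` and woman `w` are partners (teammates) in game `g`. -/
def Game.partners {n : ℕ} (m w : Fin n) (g : Game n) : Prop :=
  (m, w) ∈ g

/-- Man `m` and woman `w` are opponents in game `g` (on different teams). -/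
def Game.opposesMW {n : ℕ} (m w : Fin n) (g : Game n) : Prop :=
  ∃ a b : Fin n × Fin n, g = s(a, b) ∧ a.1 = m ∧ b.2 = w

/-- Men `m` and `m'` are opponents in game `g`. -/
def Game.opposesMM {n : ℕ} (m m' : Fin n) (g : Game n) : Prop :=
  ∃ a b : Fin n × Fin n, g = s(a, b) ∧ a.1 = m ∧ b.1 = m'

/-- Women `w` and `w'` are opponents in game `g`. -/
def Game.opposesWW {n : ℕ} (w w' : Fin n) (g : Game n) : Prop :=
  ∃ a b : Fin n × Fin n, g = s(a, b) ∧ a.2 = w ∧ b.2 = w'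

/-- A complete mixed doubles round robin tournament CMDRR(n,k). -/
structure CMDRR (n k : ℕ) where
  /-- The spouse pairs (man, woman). -/
  spouses : Finset (Fin n × Fin n)
  spouses_card : spouses.card = k
  spouses_inj1 : ∀ p ∈ spouses, ∀ q ∈ spouses, p.1 = q.1 → p = q
  spouses_inj2 : ∀ p ∈ spouses, ∀ q ∈ spouses, p.2 = q.2 → p = q
  /-- The multiset of games. -/
  games : Multiset (Game n)
  valid : ∀ g ∈ games, g.valid
  /-- (i) no game contains both members of a spouse pair. -/
  no_spouse_game : ∀ g ∈ games, ∀ p ∈ spouses, ¬ (Game.manIn p.1 g ∧ Game.womanIn p.2 g)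
  /-- (ii) every non-spouse man-woman pair partners exactly once ... -/
  partners_once : ∀ m w : Fin n, (m, w) ∉ spouses →
    games.countP (Game.partners m w) = 1
  /-- ... and opposes exactly once. -/
  opposesMW_once : ∀ m w : Fin n, (m, w) ∉ spouses →
    games.countP (Game.opposesMW m w) = 1
  /-- (iii) a spoused man opposes every other man exactly once. -/
  spousedM_opposes : ∀ m ∈ spouses.image Prod.fst, ∀ m' : Fin n, m' ≠ m →
    games.countP (Game.opposesMM m m') = 1
  /-- (iii) a spoused woman opposes every other woman exactly once. -/
  spousedW_opposes : ∀ w ∈ spouses.image Prod.snd, ∀ w' : Fin n, w' ≠ w →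
    games.countP (Game.opposesWW w w') = 1
  /-- (iv) an unspoused man opposes exactly one other unspoused man exactly twice,
  and all other men exactly once. -/
  unspousedM_opposes : ∀ m : Fin n, m ∉ spouses.image Prod.fst →
    ∃ m' : Fin n, m' ≠ m ∧ m' ∉ spouses.image Prod.fst ∧
      games.countP (Game.opposesMM m m') = 2 ∧
      ∀ m'' : Fin n, m'' ≠ m → m'' ≠ m' → games.countP (Game.opposesMM m m'') = 1
  /-- (iv) likewise for unspoused women. -/
  unspousedW_opposes : ∀ w : Fin n, w ∉ spouses.image Prod.snd →
    ∃ w' : Fin n, w' ≠ w ∧ w' ∉ spouses.image Prod.snd ∧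
      games.countP (Game.opposesWW w w') = 2 ∧
      ∀ w'' : Fin n, w'' ≠ w → w'' ≠ w' → games.countP (Game.opposesWW w w'') = 1

/-- A round: a multiset of games in which each player appears at most once. -/
def IsRound {n : ℕ} (r : Multiset (Game n)) : Prop :=
  (∀ m : Fin n, r.countP (Game.manIn m) ≤ 1) ∧
  (∀ w : Fin n, r.countP (Game.womanIn w) ≤ 1)

/-- A full round: all players play if `n` is even; all but exactly one man and
one woman play if `n` is odd. -/
def FullRound {n : ℕ} (r : Multiset (Game n)) : Prop :=
  IsRound r ∧
  ((Even n ∧ (∀ m : Fin n, r.countP (Game.manIn m) = 1) ∧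
      (∀ w : Fin n, r.countP (Game.womanIn w) = 1)) ∨
   (¬ Even n ∧ (∃! m : Fin n, r.countP (Game.manIn m) = 0) ∧
      (∃! w : Fin n, r.countP (Game.womanIn w) = 0)))


set_option maxRecDepth 100000

section Helpers

variable {n : ℕ}

def bValid : Game n → Bool :=
  Sym2.lift ⟨fun a b => decide (a.1 ≠ b.1 ∧ a.2 ≠ b.2), by
    intro a b; rw [decide_eq_decide]
    constructor <;> rintro ⟨h1, h2⟩ <;> exact ⟨h1.symm, h2.symm⟩⟩

def bManIn (m : Fin n) : Game n → Bool :=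
  Sym2.lift ⟨fun a b => decide (a.1 = m ∨ b.1 = m), by
    intro a b; rw [decide_eq_decide]; exact or_comm⟩

def bWomanIn (w : Fin n) : Game n → Bool :=
  Sym2.lift ⟨fun a b => decide (a.2 = w ∨ b.2 = w), by
    intro a b; rw [decide_eq_decide]; exact or_comm⟩

def bPartners (m w : Fin n) : Game n → Bool :=
  Sym2.lift ⟨fun a b => decide ((m, w) = a ∨ (m, w) = b), by
    intro a b; rw [decide_eq_decide]; exact or_comm⟩

def bOMW (m w : Fin n) : Game n → Bool :=
  Sym2.lift ⟨fun a b => decide ((a.1 = m ∧ b.2 = w) ∨ (b.1 = m ∧ a.2 = w)), by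
    intro a b; rw [decide_eq_decide]; exact or_comm⟩

def bOMM (m m' : Fin n) : Game n → Bool :=
  Sym2.lift ⟨fun a b => decide ((a.1 = m ∧ b.1 = m') ∨ (b.1 = m ∧ a.1 = m')), by
    intro a b; rw [decide_eq_decide]; exact or_comm⟩

def bOWW (w w' : Fin n) : Game n → Bool :=
  Sym2.lift ⟨fun a b => decide ((a.2 = w ∧ b.2 = w') ∨ (b.2 = w ∧ a.2 = w')), by
    intro a b; rw [decide_eq_decide]; exact or_comm⟩

theorem valid_iff (g : Game n) : g.valid ↔ bValid g = true := by
  induction g using Sym2.ind with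
  | _ x y =>
    simp only [bValid, Sym2.lift_mk, decide_eq_true_eq, Game.valid]
    constructor
    · rintro ⟨a, b, hab, h1, h2⟩
      rw [Sym2.eq_iff] at hab
      rcases hab with ⟨rfl, rfl⟩ | ⟨rfl, rfl⟩
      exacts [⟨h1, h2⟩, ⟨h1.symm, h2.symm⟩]
    · rintro ⟨h1, h2⟩; exact ⟨x, y, rfl, h1, h2⟩

theorem manIn_iff (m : Fin n) (g : Game n) : Game.manIn m g ↔ bManIn m g = true := by
  induction g using Sym2.ind with
  | _ x y =>
    simp only [bManIn, Sym2.lift_mk, decide_eq_true_eq, Game.manIn]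
    constructor
    · rintro ⟨a, b, hab, h1⟩
      rw [Sym2.eq_iff] at hab
      rcases hab with ⟨rfl, rfl⟩ | ⟨rfl, rfl⟩
      exacts [Or.inl h1, Or.inr h1]
    · rintro (h | h)
      exacts [⟨x, y, rfl, h⟩, ⟨y, x, Sym2.eq_swap, h⟩]

theorem womanIn_iff (w : Fin n) (g : Game n) : Game.womanIn w g ↔ bWomanIn w g = true := by
  induction g using Sym2.ind with
  | _ x y =>
    simp only [bWomanIn, Sym2.lift_mk, decide_eq_true_eq, Game.womanIn]
    constructor
    · rintro ⟨a, b, hab, h1⟩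
      rw [Sym2.eq_iff] at hab
      rcases hab with ⟨rfl, rfl⟩ | ⟨rfl, rfl⟩
      exacts [Or.inl h1, Or.inr h1]
    · rintro (h | h)
      exacts [⟨x, y, rfl, h⟩, ⟨y, x, Sym2.eq_swap, h⟩]

theorem partners_iff (m w : Fin n) (g : Game n) :
    Game.partners m w g ↔ bPartners m w g = true := by
  induction g using Sym2.ind with
  | _ x y =>
    simp only [bPartners, Sym2.lift_mk, decide_eq_true_eq, Game.partners, Sym2.mem_iff]

theorem oMW_iff (m w : Fin n) (g : Game n) :
    Game.opposesMW m w g ↔ bOMW m w g = true := by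
  induction g using Sym2.ind with
  | _ x y =>
    simp only [bOMW, Sym2.lift_mk, decide_eq_true_eq, Game.opposesMW]
    constructor
    · rintro ⟨a, b, hab, h1, h2⟩
      rw [Sym2.eq_iff] at hab
      rcases hab with ⟨rfl, rfl⟩ | ⟨rfl, rfl⟩
      exacts [Or.inl ⟨h1, h2⟩, Or.inr ⟨h1, h2⟩]
    · rintro (⟨h1, h2⟩ | ⟨h1, h2⟩)
      exacts [⟨x, y, rfl, h1, h2⟩, ⟨y, x, Sym2.eq_swap, h1, h2⟩]

theorem oMM_iff (m m' : Fin n) (g : Game n) :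
    Game.opposesMM m m' g ↔ bOMM m m' g = true := by
  induction g using Sym2.ind with
  | _ x y =>
    simp only [bOMM, Sym2.lift_mk, decide_eq_true_eq, Game.opposesMM]
    constructor
    · rintro ⟨a, b, hab, h1, h2⟩
      rw [Sym2.eq_iff] at hab
      rcases hab with ⟨rfl, rfl⟩ | ⟨rfl, rfl⟩
      exacts [Or.inl ⟨h1, h2⟩, Or.inr ⟨h1, h2⟩]
    · rintro (⟨h1, h2⟩ | ⟨h1, h2⟩)
      exacts [⟨x, y, rfl, h1, h2⟩, ⟨y, x, Sym2.eq_swap, h1, h2⟩]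

theorem oWW_iff (w w' : Fin n) (g : Game n) :
    Game.opposesWW w w' g ↔ bOWW w w' g = true := by
  induction g using Sym2.ind with
  | _ x y =>
    simp only [bOWW, Sym2.lift_mk, decide_eq_true_eq, Game.opposesWW]
    constructor
    · rintro ⟨a, b, hab, h1, h2⟩
      rw [Sym2.eq_iff] at hab
      rcases hab with ⟨rfl, rfl⟩ | ⟨rfl, rfl⟩
      exacts [Or.inl ⟨h1, h2⟩, Or.inr ⟨h1, h2⟩]
    · rintro (⟨h1, h2⟩ | ⟨h1, h2⟩)
      exacts [⟨x, y, rfl, h1, h2⟩, ⟨y, x, Sym2.eq_swap, h1, h2⟩]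

theorem msP {α : Type*} {p : α → Prop} {inst : DecidablePred p} {f : α → Bool}
    (h : ∀ a, p a ↔ f a = true) (s : Multiset α) :
    @Multiset.countP α p inst s = Multiset.countP (fun a => f a = true) s :=
  Multiset.countP_congr rfl (fun x _ => by
    exact propext (h x))

theorem mP_partners (m w : Fin n) {inst : DecidablePred (Game.partners m w)}
    (s : Multiset (Game n)) :
    @Multiset.countP _ (Game.partners m w) inst s
      = Multiset.countP (fun g => bPartners m w g = true) s :=
  msP (partners_iff m w) s

theorem mP_oMW (m w : Fin n) {inst : DecidablePred (Game.opposesMW m w)}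
    (s : Multiset (Game n)) :
    @Multiset.countP _ (Game.opposesMW m w) inst s
      = Multiset.countP (fun g => bOMW m w g = true) s :=
  msP (oMW_iff m w) s

theorem mP_oMM (m m' : Fin n) {inst : DecidablePred (Game.opposesMM m m')}
    (s : Multiset (Game n)) :
    @Multiset.countP _ (Game.opposesMM m m') inst s
      = Multiset.countP (fun g => bOMM m m' g = true) s :=
  msP (oMM_iff m m') s

theorem mP_oWW (w w' : Fin n) {inst : DecidablePred (Game.opposesWW w w')}
    (s : Multiset (Game n)) :
    @Multiset.countP _ (Game.opposesWW w w') inst s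
      = Multiset.countP (fun g => bOWW w w' g = true) s :=
  msP (oWW_iff w w') s

end Helpers


def spL0 : List (Fin 8 × Fin 8) := []

def gl0 : List (Game 8) := [
  s((0,0),(7,2)), s((0,1),(5,0)), s((0,2),(4,7)), s((0,3),(6,4)),
  s((0,4),(2,1)), s((0,5),(1,6)), s((0,6),(1,3)), s((0,7),(3,5)),
  s((1,0),(4,4)), s((1,1),(3,7)), s((1,2),(6,1)), s((1,4),(5,2)),
  s((1,5),(2,0)), s((1,7),(7,3)), s((2,2),(3,3)), s((2,3),(3,0)),
  s((2,4),(7,7)), s((2,5),(6,2)), s((2,6),(4,1)), s((2,7),(5,6)),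
  s((3,1),(4,0)), s((3,2),(7,6)), s((3,4),(6,5)), s((3,6),(5,4)),
  s((4,2),(5,3)), s((4,3),(5,5)), s((4,5),(7,4)), s((4,6),(6,7)),
  s((5,1),(7,5)), s((5,7),(6,0)), s((6,3),(7,1)), s((6,6),(7,0))]

def T0 : CMDRR 8 0 where
  spouses := spL0.toFinset
  spouses_card := by decide +kernel
  spouses_inj1 := by decide +kernel
  spouses_inj2 := by decide +kernel
  games := ↑gl0
  valid := by
    have h : gl0.all bValid = true := by decide +kernel
    rw [List.all_eq_true] at h
    exact fun g hg => (valid_iff g).mpr (h g (Multiset.mem_coe.mp hg))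
  no_spouse_game := by
    have h : (gl0.all fun g =>
        spL0.all fun p => !(bManIn p.1 g && bWomanIn p.2 g)) = true := by decide +kernel
    rw [List.all_eq_true] at h
    rintro g hg p hp ⟨h1, h2⟩
    have h3 := h g (Multiset.mem_coe.mp hg)
    rw [List.all_eq_true] at h3
    have h4 := h3 p (List.mem_toFinset.mp hp)
    rw [manIn_iff p.1 g] at h1
    rw [womanIn_iff p.2 g] at h2
    rw [h1, h2] at h4
    simp at h4
  partners_once := by simp only [mP_partners]; decide +kernel
  opposesMW_once := by simp only [mP_oMW]; decide +kernel
  spousedM_opposes := by simp only [mP_oMM]; decide +kernel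
  spousedW_opposes := by simp only [mP_oWW]; decide +kernel
  unspousedM_opposes := by simp only [mP_oMM]; decide +kernel
  unspousedW_opposes := by simp only [mP_oWW]; decide +kernel

def spL2 : List (Fin 8 × Fin 8) := [(0,0), (1,1)]

def gl2 : List (Game 8) := [
  s((0,1),(2,2)), s((0,2),(7,6)), s((0,3),(4,1)), s((0,4),(5,7)),
  s((0,5),(1,4)), s((0,6),(6,5)), s((0,7),(3,3)), s((1,0),(7,4)),
  s((1,2),(5,3)), s((1,3),(3,6)), s((1,5),(6,2)), s((1,6),(2,7)),
  s((1,7),(4,0)), s((2,0),(6,3)), s((2,1),(3,0)), s((2,3),(5,5)),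
  s((2,4),(4,2)), s((2,5),(7,7)), s((2,6),(3,4)), s((3,1),(7,5)),
  s((3,2),(6,0)), s((3,5),(4,4)), s((3,7),(5,2)), s((4,3),(7,2)),
  s((4,5),(5,0)), s((4,6),(5,1)), s((4,7),(6,6)), s((5,4),(6,1)),
  s((5,6),(7,0)), s((6,4),(7,3)), s((6,7),(7,1))]

def T2 : CMDRR 8 2 where
  spouses := spL2.toFinset
  spouses_card := by decide +kernel
  spouses_inj1 := by decide +kernel
  spouses_inj2 := by decide +kernel
  games := ↑gl2
  valid := by
    have h : gl2.all bValid = true := by decide +kernel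
    rw [List.all_eq_true] at h
    exact fun g hg => (valid_iff g).mpr (h g (Multiset.mem_coe.mp hg))
  no_spouse_game := by
    have h : (gl2.all fun g =>
        spL2.all fun p => !(bManIn p.1 g && bWomanIn p.2 g)) = true := by decide +kernel
    rw [List.all_eq_true] at h
    rintro g hg p hp ⟨h1, h2⟩
    have h3 := h g (Multiset.mem_coe.mp hg)
    rw [List.all_eq_true] at h3
    have h4 := h3 p (List.mem_toFinset.mp hp)
    rw [manIn_iff p.1 g] at h1
    rw [womanIn_iff p.2 g] at h2
    rw [h1, h2] at h4
    simp at h4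
  partners_once := by simp only [mP_partners]; decide +kernel
  opposesMW_once := by simp only [mP_oMW]; decide +kernel
  spousedM_opposes := by simp only [mP_oMM]; decide +kernel
  spousedW_opposes := by simp only [mP_oWW]; decide +kernel
  unspousedM_opposes := by simp only [mP_oMM]; decide +kernel
  unspousedW_opposes := by simp only [mP_oWW]; decide +kernel

def spL4 : List (Fin 8 × Fin 8) := [(0,0), (1,1), (2,2), (3,3)]

def gl4 : List (Game 8) := [
  s((0,1),(3,5)), s((0,2),(4,1)), s((0,3),(5,7)), s((0,4),(6,6)),
  s((0,5),(7,2)), s((0,6),(2,3)), s((0,7),(1,4)), s((1,0),(5,4)),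
  s((1,2),(6,3)), s((1,3),(7,5)), s((1,5),(2,0)), s((1,6),(4,2)),
  s((1,7),(3,6)), s((2,1),(5,3)), s((2,4),(3,1)), s((2,5),(6,4)),
  s((2,6),(7,7)), s((2,7),(4,0)), s((3,0),(7,6)), s((3,2),(5,0)),
  s((3,4),(4,5)), s((3,7),(6,2)), s((4,3),(6,0)), s((4,4),(7,3)),
  s((4,6),(5,1)), s((4,7),(5,5)), s((5,2),(7,4)), s((5,6),(6,5)),
  s((6,1),(7,0)), s((6,7),(7,1))]

def T4 : CMDRR 8 4 where
  spouses := spL4.toFinset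
  spouses_card := by decide +kernel
  spouses_inj1 := by decide +kernel
  spouses_inj2 := by decide +kernel
  games := ↑gl4
  valid := by
    have h : gl4.all bValid = true := by decide +kernel
    rw [List.all_eq_true] at h
    exact fun g hg => (valid_iff g).mpr (h g (Multiset.mem_coe.mp hg))
  no_spouse_game := by
    have h : (gl4.all fun g =>
        spL4.all fun p => !(bManIn p.1 g && bWomanIn p.2 g)) = true := by decide +kernel
    rw [List.all_eq_true] at h
    rintro g hg p hp ⟨h1, h2⟩
    have h3 := h g (Multiset.mem_coe.mp hg)
    rw [List.all_eq_true] at h3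
    have h4 := h3 p (List.mem_toFinset.mp hp)
    rw [manIn_iff p.1 g] at h1
    rw [womanIn_iff p.2 g] at h2
    rw [h1, h2] at h4
    simp at h4
  partners_once := by simp only [mP_partners]; decide +kernel
  opposesMW_once := by simp only [mP_oMW]; decide +kernel
  spousedM_opposes := by simp only [mP_oMM]; decide +kernel
  spousedW_opposes := by simp only [mP_oWW]; decide +kernel
  unspousedM_opposes := by simp only [mP_oMM]; decide +kernel
  unspousedW_opposes := by simp only [mP_oWW]; decide +kernel

def spL6 : List (Fin 8 × Fin 8) := [(0,0), (1,1), (2,2), (3,3), (4,4), (5,5)]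

def gl6 : List (Game 8) := [
  s((0,1),(7,2)), s((0,2),(5,7)), s((0,3),(4,1)), s((0,4),(2,6)),
  s((0,5),(3,4)), s((0,6),(1,5)), s((0,7),(6,3)), s((1,0),(6,2)),
  s((1,2),(4,3)), s((1,3),(5,4)), s((1,4),(7,7)), s((1,6),(3,0)),
  s((1,7),(2,5)), s((2,0),(5,3)), s((2,1),(4,6)), s((2,3),(7,5)),
  s((2,4),(6,0)), s((2,7),(3,1)), s((3,2),(7,4)), s((3,5),(6,1)),
  s((3,6),(5,2)), s((3,7),(4,0)), s((4,2),(6,5)), s((4,5),(7,0)),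
  s((4,7),(5,6)), s((5,0),(7,1)), s((5,1),(6,4)), s((6,6),(7,3)),
  s((6,7),(7,6))]

def T6 : CMDRR 8 6 where
  spouses := spL6.toFinset
  spouses_card := by decide +kernel
  spouses_inj1 := by decide +kernel
  spouses_inj2 := by decide +kernel
  games := ↑gl6
  valid := by
    have h : gl6.all bValid = true := by decide +kernel
    rw [List.all_eq_true] at h
    exact fun g hg => (valid_iff g).mpr (h g (Multiset.mem_coe.mp hg))
  no_spouse_game := by
    have h : (gl6.all fun g =>
        spL6.all fun p => !(bManIn p.1 g && bWomanIn p.2 g)) = true := by decide +kernel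
    rw [List.all_eq_true] at h
    rintro g hg p hp ⟨h1, h2⟩
    have h3 := h g (Multiset.mem_coe.mp hg)
    rw [List.all_eq_true] at h3
    have h4 := h3 p (List.mem_toFinset.mp hp)
    rw [manIn_iff p.1 g] at h1
    rw [womanIn_iff p.2 g] at h2
    rw [h1, h2] at h4
    simp at h4
  partners_once := by simp only [mP_partners]; decide +kernel
  opposesMW_once := by simp only [mP_oMW]; decide +kernel
  spousedM_opposes := by simp only [mP_oMM]; decide +kernel
  spousedW_opposes := by simp only [mP_oWW]; decide +kernel
  unspousedM_opposes := by simp only [mP_oMM]; decide +kernel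
  unspousedW_opposes := by simp only [mP_oWW]; decide +kernel

/-- There exists a CMDRR(8,k) for each k ∈ {0, 2, 4, 6}. -/
theorem cmdrr_8_exists : ∀ k ∈ ({0, 2, 4, 6} : Set ℕ), Nonempty (CMDRR 8 k) := by
  intro k hk
  simp only [Set.mem_insert_iff, Set.mem_singleton_iff] at hk
  rcases hk with rfl | rfl | rfl | rfl
  exacts [⟨T0⟩, ⟨T2⟩, ⟨T4⟩, ⟨T6⟩]
end

section
/- There exists a CMDRR(9,3) whose 39 games can be partitioned into 13 rounds of 3 games each, such that each player plays in at most one game per round. -/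
open scoped Classical

namespace CMDRRAux

abbrev PP := (Fin 9 × Fin 9) × (Fin 9 × Fin 9)

def RL : List (List PP) := [
  [((6,7),(8,2)), ((2,8),(0,4)), ((7,0),(1,6))],
  [((8,7),(0,6)), ((6,0),(7,8)), ((1,5),(4,2))],
  [((1,7),(4,8)), ((6,1),(3,4)), ((0,0),(5,5))],
  [((2,7),(3,5)), ((6,8),(4,1)), ((5,3),(7,2))],
  [((5,7),(6,4)), ((2,1),(7,3)), ((3,2),(4,6))],
  [((0,7),(1,1)), ((6,2),(2,0)), ((4,5),(5,4))],
  [((3,7),(5,0)), ((0,8),(2,2)), ((1,4),(8,3))],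
  [((4,7),(2,3)), ((3,8),(7,5)), ((5,2),(8,1))],
  [((6,3),(0,5)), ((7,6),(4,4)), ((1,2),(3,1))],
  [((6,5),(1,3)), ((2,6),(5,1)), ((3,0),(8,4))],
  [((5,8),(3,3)), ((2,5),(8,6)), ((0,1),(4,0))],
  [((1,8),(5,6)), ((0,2),(7,4)), ((4,3),(8,0))],
  [((0,3),(3,6)), ((2,4),(1,0)), ((7,1),(8,5))]]

def L : List PP := [((6,7),(8,2)), ((2,8),(0,4)), ((7,0),(1,6)), ((8,7),(0,6)), ((6,0),(7,8)), ((1,5),(4,2)), ((1,7),(4,8)), ((6,1),(3,4)), ((0,0),(5,5)), ((2,7),(3,5)), ((6,8),(4,1)), ((5,3),(7,2)), ((5,7),(6,4)), ((2,1),(7,3)), ((3,2),(4,6)), ((0,7),(1,1)), ((6,2),(2,0)), ((4,5),(5,4)), ((3,7),(5,0)), ((0,8),(2,2)), ((1,4),(8,3)), ((4,7),(2,3)), ((3,8),(7,5)), ((5,2),(8,1)), ((6,3),(0,5)), ((7,6),(4,4)), ((1,2),(3,1)), ((6,5),(1,3)), ((2,6),(5,1)), ((3,0),(8,4)), ((5,8),(3,3)),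 ((2,5),(8,6)), ((0,1),(4,0)), ((1,8),(5,6)), ((0,2),(7,4)), ((4,3),(8,0)), ((0,3),(3,6)), ((2,4),(1,0)), ((7,1),(8,5))]

def S : Finset (Fin 9 × Fin 9) := {(6,6),(7,7),(8,8)}

lemma valid_mk {n : ℕ} (a b : Fin n × Fin n) :
    Game.valid (s(a,b) : Game n) ↔ a.1 ≠ b.1 ∧ a.2 ≠ b.2 := by
  constructor
  · rintro ⟨x, y, h, h1, h2⟩
    rw [Sym2.eq_iff] at h
    rcases h with ⟨rfl, rfl⟩ | ⟨rfl, rfl⟩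
    · exact ⟨h1, h2⟩
    · exact ⟨h1.symm, h2.symm⟩
  · rintro ⟨h1, h2⟩
    exact ⟨a, b, rfl, h1, h2⟩

lemma manIn_mk {n : ℕ} (a b : Fin n × Fin n) (m : Fin n) :
    Game.manIn m s(a,b) ↔ a.1 = m ∨ b.1 = m := by
  constructor
  · rintro ⟨x, y, h, h1⟩
    rw [Sym2.eq_iff] at h
    rcases h with ⟨rfl, rfl⟩ | ⟨rfl, rfl⟩
    · exact Or.inl h1
    · exact Or.inr h1
  · rintro (h | h)
    · exact ⟨a, b, rfl, h⟩
    · exact ⟨b, a, Sym2.eq_swap, h⟩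

lemma womanIn_mk {n : ℕ} (a b : Fin n × Fin n) (w : Fin n) :
    Game.womanIn w s(a,b) ↔ a.2 = w ∨ b.2 = w := by
  constructor
  · rintro ⟨x, y, h, h1⟩
    rw [Sym2.eq_iff] at h
    rcases h with ⟨rfl, rfl⟩ | ⟨rfl, rfl⟩
    · exact Or.inl h1
    · exact Or.inr h1
  · rintro (h | h)
    · exact ⟨a, b, rfl, h⟩
    · exact ⟨b, a, Sym2.eq_swap, h⟩

lemma partners_mk {n : ℕ} (a b : Fin n × Fin n) (m w : Fin n) :
    Game.partners m w s(a,b) ↔ (m, w) = a ∨ (m, w) = b := by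
  unfold Game.partners
  rw [Sym2.mem_iff]

lemma opposesMW_mk {n : ℕ} (a b : Fin n × Fin n) (m w : Fin n) :
    Game.opposesMW m w s(a,b) ↔ (a.1 = m ∧ b.2 = w) ∨ (b.1 = m ∧ a.2 = w) := by
  constructor
  · rintro ⟨x, y, h, h1, h2⟩
    rw [Sym2.eq_iff] at h
    rcases h with ⟨rfl, rfl⟩ | ⟨rfl, rfl⟩
    · exact Or.inl ⟨h1, h2⟩
    · exact Or.inr ⟨h1, h2⟩
  · rintro (⟨h1, h2⟩ | ⟨h1, h2⟩)
    · exact ⟨a, b, rfl, h1, h2⟩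
    · exact ⟨b, a, Sym2.eq_swap, h1, h2⟩

lemma opposesMM_mk {n : ℕ} (a b : Fin n × Fin n) (m m' : Fin n) :
    Game.opposesMM m m' s(a,b) ↔ (a.1 = m ∧ b.1 = m') ∨ (b.1 = m ∧ a.1 = m') := by
  constructor
  · rintro ⟨x, y, h, h1, h2⟩
    rw [Sym2.eq_iff] at h
    rcases h with ⟨rfl, rfl⟩ | ⟨rfl, rfl⟩
    · exact Or.inl ⟨h1, h2⟩
    · exact Or.inr ⟨h1, h2⟩
  · rintro (⟨h1, h2⟩ | ⟨h1, h2⟩)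
    · exact ⟨a, b, rfl, h1, h2⟩
    · exact ⟨b, a, Sym2.eq_swap, h1, h2⟩

lemma opposesWW_mk {n : ℕ} (a b : Fin n × Fin n) (w w' : Fin n) :
    Game.opposesWW w w' s(a,b) ↔ (a.2 = w ∧ b.2 = w') ∨ (b.2 = w ∧ a.2 = w') := by
  constructor
  · rintro ⟨x, y, h, h1, h2⟩
    rw [Sym2.eq_iff] at h
    rcases h with ⟨rfl, rfl⟩ | ⟨rfl, rfl⟩
    · exact Or.inl ⟨h1, h2⟩
    · exact Or.inr ⟨h1, h2⟩
  · rintro (⟨h1, h2⟩ | ⟨h1, h2⟩)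
    · exact ⟨a, b, rfl, h1, h2⟩
    · exact ⟨b, a, Sym2.eq_swap, h1, h2⟩

lemma mk_eq (x : PP) : (Sym2.mk.uncurry x : Game 9) = s(x.1, x.2) := rfl

lemma countP_coe_map (p : Game 9 → Prop) [DecidablePred p] (P : PP → Bool)
    (h : ∀ x : PP, p (Sym2.mk.uncurry x) ↔ P x) (l : List PP) :
    Multiset.countP p (↑(l.map Sym2.mk.uncurry) : Multiset (Game 9)) = l.countP P := by
  rw [Multiset.coe_countP, List.countP_map]
  apply List.countP_congr
  intro x _
  simp [Function.comp, h x]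

def BmanIn (m : Fin 9) (x : PP) : Bool := x.1.1 = m || x.2.1 = m
def BwomanIn (w : Fin 9) (x : PP) : Bool := x.1.2 = w || x.2.2 = w
def Bpartners (m w : Fin 9) (x : PP) : Bool := (m, w) = x.1 || (m, w) = x.2
def BoppMW (m w : Fin 9) (x : PP) : Bool :=
  (x.1.1 = m && x.2.2 = w) || (x.2.1 = m && x.1.2 = w)
def BoppMM (m m' : Fin 9) (x : PP) : Bool :=
  (x.1.1 = m && x.2.1 = m') || (x.2.1 = m && x.1.1 = m')
def BoppWW (w w' : Fin 9) (x : PP) : Bool :=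
  (x.1.2 = w && x.2.2 = w') || (x.2.2 = w && x.1.2 = w')

lemma bridge_manIn (m : Fin 9) (x : PP) : Game.manIn m (Sym2.mk.uncurry x) ↔ BmanIn m x := by
  rw [mk_eq, manIn_mk]; simp [BmanIn]
lemma bridge_womanIn (w : Fin 9) (x : PP) : Game.womanIn w (Sym2.mk.uncurry x) ↔ BwomanIn w x := by
  rw [mk_eq, womanIn_mk]; simp [BwomanIn]
lemma bridge_partners (m w : Fin 9) (x : PP) :
    Game.partners m w (Sym2.mk.uncurry x) ↔ Bpartners m w x := by
  rw [mk_eq, partners_mk]; simp [Bpartners]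
lemma bridge_oppMW (m w : Fin 9) (x : PP) :
    Game.opposesMW m w (Sym2.mk.uncurry x) ↔ BoppMW m w x := by
  rw [mk_eq, opposesMW_mk]; simp [BoppMW]
lemma bridge_oppMM (m m' : Fin 9) (x : PP) :
    Game.opposesMM m m' (Sym2.mk.uncurry x) ↔ BoppMM m m' x := by
  rw [mk_eq, opposesMM_mk]; simp [BoppMM]
lemma bridge_oppWW (w w' : Fin 9) (x : PP) :
    Game.opposesWW w w' (Sym2.mk.uncurry x) ↔ BoppWW w w' x := by
  rw [mk_eq, opposesWW_mk]; simp [BoppWW]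

lemma key_valid :
    L.all (fun x => decide (x.1.1 ≠ x.2.1) && decide (x.1.2 ≠ x.2.2)) = true := by decide

def Slist : List (Fin 9 × Fin 9) := [(6,6),(7,7),(8,8)]

lemma mem_S {p : Fin 9 × Fin 9} (hp : p ∈ S) : p ∈ Slist := by
  have : p = (6,6) ∨ p = (7,7) ∨ p = (8,8) := by simpa [S] using hp
  rcases this with rfl | rfl | rfl <;> simp [Slist]

lemma key_no_spouse :
    (L.all fun x => Slist.all fun p =>
      !((decide (x.1.1 = p.1) || decide (x.2.1 = p.1)) &&
        (decide (x.1.2 = p.2) || decide (x.2.2 = p.2)))) = true := by decide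

lemma key_partners : ∀ m w : Fin 9, (m, w) ∉ S → L.countP (Bpartners m w) = 1 := by decide

lemma key_oppMW : ∀ m w : Fin 9, (m, w) ∉ S → L.countP (BoppMW m w) = 1 := by decide

lemma key_spM : ∀ m ∈ S.image Prod.fst, ∀ m' : Fin 9, m' ≠ m →
    L.countP (BoppMM m m') = 1 := by decide

lemma key_spW : ∀ w ∈ S.image Prod.snd, ∀ w' : Fin 9, w' ≠ w →
    L.countP (BoppWW w w') = 1 := by decide

lemma key_unM : ∀ m : Fin 9, m ∉ S.image Prod.fst →
    ∃ m' : Fin 9, m' ≠ m ∧ m' ∉ S.image Prod.fst ∧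
      L.countP (BoppMM m m') = 2 ∧
      ∀ m'' : Fin 9, m'' ≠ m → m'' ≠ m' → L.countP (BoppMM m m'') = 1 := by decide

lemma key_unW : ∀ w : Fin 9, w ∉ S.image Prod.snd →
    ∃ w' : Fin 9, w' ≠ w ∧ w' ∉ S.image Prod.snd ∧
      L.countP (BoppWW w w') = 2 ∧
      ∀ w'' : Fin 9, w'' ≠ w → w'' ≠ w' → L.countP (BoppWW w w'') = 1 := by decide

lemma key_rounds :
    (RL.all fun x =>
      ((List.finRange 9).all fun m => decide (x.countP (BmanIn m) ≤ 1)) &&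
      ((List.finRange 9).all fun w => decide (x.countP (BwomanIn w) ≤ 1)) &&
      decide (x.length = 3)) = true := by decide

def T : CMDRR 9 3 where
  spouses := S
  spouses_card := by decide
  spouses_inj1 := by
    intro p hp q hq h
    have hp' : p = (6,6) ∨ p = (7,7) ∨ p = (8,8) := by simpa [S] using hp
    have hq' : q = (6,6) ∨ q = (7,7) ∨ q = (8,8) := by simpa [S] using hq
    rcases hp' with rfl | rfl | rfl <;> rcases hq' with rfl | rfl | rfl <;>
      revert h <;> decide
  spouses_inj2 := by
    intro p hp q hq h
    have hp' : p = (6,6) ∨ p = (7,7) ∨ p = (8,8) := by simpa [S] using hp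
    have hq' : q = (6,6) ∨ q = (7,7) ∨ q = (8,8) := by simpa [S] using hq
    rcases hp' with rfl | rfl | rfl <;> rcases hq' with rfl | rfl | rfl <;>
      revert h <;> decide
  games := (↑(L.map Sym2.mk.uncurry) : Multiset (Game 9))
  valid := by
    intro g hg
    rw [Multiset.mem_coe, List.mem_map] at hg
    obtain ⟨x, hx, rfl⟩ := hg
    rw [mk_eq, valid_mk]
    have h := List.all_eq_true.mp key_valid x hx
    simp only [Bool.and_eq_true, decide_eq_true_eq] at h
    exact h
  no_spouse_game := by
    intro g hg p hp
    rw [Multiset.mem_coe, List.mem_map] at hg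
    obtain ⟨x, hx, rfl⟩ := hg
    rw [mk_eq, manIn_mk, womanIn_mk]
    have h := List.all_eq_true.mp (List.all_eq_true.mp key_no_spouse x hx) p (mem_S hp)
    simp only [Bool.not_eq_true', Bool.and_eq_false_iff, Bool.or_eq_false_iff,
      decide_eq_false_iff_not] at h
    rintro ⟨h1, h2⟩
    rcases h with ⟨ha, hb⟩ | ⟨ha, hb⟩ <;>
      rcases h1 with h1 | h1 <;> rcases h2 with h2 | h2 <;> tauto
  partners_once := by
    intro m w h
    rw [countP_coe_map _ (Bpartners m w) (bridge_partners m w)]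
    exact key_partners m w h
  opposesMW_once := by
    intro m w h
    rw [countP_coe_map _ (BoppMW m w) (bridge_oppMW m w)]
    exact key_oppMW m w h
  spousedM_opposes := by
    intro m hm m' h
    rw [countP_coe_map _ (BoppMM m m') (bridge_oppMM m m')]
    exact key_spM m hm m' h
  spousedW_opposes := by
    intro w hw w' h
    rw [countP_coe_map _ (BoppWW w w') (bridge_oppWW w w')]
    exact key_spW w hw w' h
  unspousedM_opposes := by
    intro m hm
    obtain ⟨m', h1, h2, h3, h4⟩ := key_unM m hm
    refine ⟨m', h1, h2, ?_, ?_⟩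
    · rw [countP_coe_map _ (BoppMM m m') (bridge_oppMM m m')]; exact h3
    · intro m'' a b
      rw [countP_coe_map _ (BoppMM m m'') (bridge_oppMM m m'')]
      exact h4 m'' a b
  unspousedW_opposes := by
    intro w hw
    obtain ⟨w', h1, h2, h3, h4⟩ := key_unW w hw
    refine ⟨w', h1, h2, ?_, ?_⟩
    · rw [countP_coe_map _ (BoppWW w w') (bridge_oppWW w w')]; exact h3
    · intro w'' a b
      rw [countP_coe_map _ (BoppWW w w'') (bridge_oppWW w w'')]
      exact h4 w'' a b

def rounds : Multiset (Multiset (Game 9)) :=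
  ↑(RL.map fun r => (↑(r.map Sym2.mk.uncurry) : Multiset (Game 9)))

end CMDRRAux

/-- There is a CMDRR(9,3) whose 39 games split into 13 rounds of 3 games each. -/
theorem cmdrr_9_3_resolution :
    ∃ T : CMDRR 9 3, ∃ rounds : Multiset (Multiset (Game 9)),
      rounds.sum = T.games ∧ Multiset.card rounds = 13 ∧
      ∀ r ∈ rounds, IsRound r ∧ Multiset.card r = 3 := by
  classical
  refine ⟨CMDRRAux.T, CMDRRAux.rounds, ?_, by rfl, ?_⟩
  · show (CMDRRAux.rounds).sum = (↑(CMDRRAux.L.map Sym2.mk.uncurry) : Multiset (Game 9))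
    rfl
  · intro r hr
    rw [CMDRRAux.rounds, Multiset.mem_coe, List.mem_map] at hr
    obtain ⟨x, hx, rfl⟩ := hr
    have h := List.all_eq_true.mp CMDRRAux.key_rounds x hx
    simp only [Bool.and_eq_true, List.all_eq_true, decide_eq_true_eq] at h
    obtain ⟨⟨h1, h2⟩, h3⟩ := h
    refine ⟨⟨?_, ?_⟩, ?_⟩
    · intro m
      rw [CMDRRAux.countP_coe_map _ (CMDRRAux.BmanIn m) (CMDRRAux.bridge_manIn m)]
      exact h1 m (List.mem_finRange m)
    · intro w
      rw [CMDRRAux.countP_coe_map _ (CMDRRAux.BwomanIn w) (CMDRRAux.bridge_womanIn w)]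
      exact h2 w (List.mem_finRange w)
    · rw [Multiset.coe_card, List.length_map]
      exact h3
end
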